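/- Let p be a convex homogeneous polynomial (convex form) on ℝ^n of degree ≥ 4 that is not a sum of squares of polynomials. Then p does not belong to the quadratic module M(c − p) ⊂ ℝ[x] for any c > 0; equivalently, there do not exist sum-of-squares polynomials σ₀, σ with p = σ₀ + σ·(c − p). -/

import Mathlib

open MvPolynomial Finset

/-- A multivariate polynomial is a sum of squares. -/
def IsSOS {n : ℕ} (p : MvPolynomial (Fin n) ℝ) : Prop :=
  ∃ (k : ℕ) (q : Fin k → MvPolynomial (Fin n) ℝ), p = ∑ j, (q j) ^ 2

namespace SOSAux

variable {n : ℕ}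

lemma sum_range_hc (f : MvPolynomial (Fin n) ℝ) {N : ℕ} (hN : f.totalDegree < N) :
    ∑ i ∈ range N, homogeneousComponent i f = f := by
  conv_rhs => rw [← sum_homogeneousComponent f]
  refine (Finset.sum_subset (Finset.range_subset_range.mpr hN) fun i _ hi => ?_).symm
  exact homogeneousComponent_eq_zero i f (by simpa using hi)

lemma hc_mul (f g : MvPolynomial (Fin n) ℝ) (m : ℕ) :
    homogeneousComponent m (f * g) =
      ∑ ij ∈ antidiagonal m,
        homogeneousComponent ij.1 f * homogeneousComponent ij.2 g := by
  classical
  set N := max (max f.totalDegree g.totalDegree) m + 1 with hN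
  have hfN : f.totalDegree < N :=
    Nat.lt_succ_of_le ((le_max_left _ _).trans (le_max_left _ _))
  have hgN : g.totalDegree < N :=
    Nat.lt_succ_of_le ((le_max_right _ _).trans (le_max_left _ _))
  have hmN : m < N := Nat.lt_succ_of_le (le_max_right _ _)
  have key : ∀ a b : ℕ,
      homogeneousComponent m (homogeneousComponent a f * homogeneousComponent b g) =
        if m = a + b then homogeneousComponent a f * homogeneousComponent b g
        else 0 := by
    intro a b
    rw [homogeneousComponent_of_mem ((mem_homogeneousSubmodule _ _).mpr
      ((homogeneousComponent_isHomogeneous a f).mul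
        (homogeneousComponent_isHomogeneous b g)))]
  conv_lhs => rw [← sum_range_hc f hfN, ← sum_range_hc g hgN, Finset.sum_mul_sum]
  rw [map_sum]
  simp_rw [map_sum, key]
  rw [← Finset.sum_product']
  have hsub : antidiagonal m ⊆ range N ×ˢ range N := by
    intro ij hij
    have h := mem_antidiagonal.mp hij
    exact Finset.mem_product.mpr ⟨Finset.mem_range.mpr (by omega),
      Finset.mem_range.mpr (by omega)⟩
  rw [← Finset.sum_subset hsub
    (fun ij _ hij => if_neg fun h => hij (mem_antidiagonal.mpr h.symm))]
  exact Finset.sum_congr rfl fun ij hij => if_pos (mem_antidiagonal.mp hij).symm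

lemma hc_sum_sq_even {k : ℕ} (u : ℕ) (q : Fin k → MvPolynomial (Fin n) ℝ)
    (h : ∀ j, ∀ i < u, homogeneousComponent i (q j) = 0) :
    homogeneousComponent (2*u) (∑ j, (q j)^2) = ∑ j, (homogeneousComponent u (q j))^2 := by
  rw [map_sum]
  refine Finset.sum_congr rfl fun j _ => ?_
  rw [sq, hc_mul]
  refine (Finset.sum_eq_single_of_mem (u, u) (HasAntidiagonal.mem_antidiagonal.mpr (by ring)) ?_).trans (sq _).symm
  intro ij hij hne
  have hsum := mem_antidiagonal.mp hij
  have hne' : ¬(ij.1 = u ∧ ij.2 = u) := fun ⟨h1, h2⟩ => hne (Prod.ext h1 h2)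
  rcases lt_or_ge ij.1 u with hlt | hge
  · rw [h j ij.1 hlt, zero_mul]
  · have : ij.2 < u := by omega
    rw [h j ij.2 this, mul_zero]

lemma hc_sum_sq_odd {k m : ℕ} (hm : m % 2 = 1) (q : Fin k → MvPolynomial (Fin n) ℝ)
    (h : ∀ j, ∀ i, 2*i < m → homogeneousComponent i (q j) = 0) :
    homogeneousComponent m (∑ j, (q j)^2) = 0 := by
  rw [map_sum]
  refine Finset.sum_eq_zero fun j _ => ?_
  rw [sq, hc_mul]
  refine Finset.sum_eq_zero fun ij hij => ?_
  have hsum := mem_antidiagonal.mp hij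
  rcases lt_or_ge (2*ij.1) m with h1 | h1
  · rw [h j ij.1 h1, zero_mul]
  · have : 2*ij.2 < m := by omega
    rw [h j ij.2 this, mul_zero]

lemma IsSOS_add {p q : MvPolynomial (Fin n) ℝ} (hp : IsSOS p) (hq : IsSOS q) :
    IsSOS (p + q) := by
  obtain ⟨k1, q1, rfl⟩ := hp
  obtain ⟨k2, q2, rfl⟩ := hq
  exact ⟨k1 + k2, Fin.append q1 q2, by
    rw [Fin.sum_univ_add]
    simp [Fin.append_left, Fin.append_right]⟩

lemma IsSOS_smul {c : ℝ} (hc : 0 ≤ c) {q : MvPolynomial (Fin n) ℝ} (hq : IsSOS q) :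
    IsSOS (C c * q) := by
  obtain ⟨k, f, rfl⟩ := hq
  refine ⟨k, fun j => C (Real.sqrt c) * f j, ?_⟩
  rw [Finset.mul_sum]
  refine Finset.sum_congr rfl fun j _ => ?_
  rw [mul_pow, ← C_pow, Real.sq_sqrt hc]

end SOSAux

open SOSAux

/-- A convex form of degree ≥ 4 that is not SOS does not lie in the quadratic module
`M(c − p)` for any `c > 0`. -/
theorem convex_form_not_sos_not_in_quadratic_module {n : ℕ}
    (p : MvPolynomial (Fin n) ℝ) (d : ℕ) (hd : 4 ≤ d)
    (hhom : p.IsHomogeneous d)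
    (hconv : ConvexOn ℝ Set.univ fun x : Fin n → ℝ => MvPolynomial.eval x p)
    (hnsos : ¬ IsSOS p) :
    ∀ c : ℝ, 0 < c →
      ¬ ∃ σ₀ σ : MvPolynomial (Fin n) ℝ, IsSOS σ₀ ∧ IsSOS σ ∧
        p = σ₀ + σ * (MvPolynomial.C c - p) := by
  rintro c hc ⟨σ₀, σ, ⟨k0, q0, rfl⟩, ⟨k1, q1, rfl⟩, hE⟩
  set S0 := ∑ j, (q0 j)^2 with hS0def
  set S1 := ∑ j, (q1 j)^2 with hS1def
  have hpmem : p ∈ homogeneousSubmodule (Fin n) ℝ d :=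
    (mem_homogeneousSubmodule _ _).mpr hhom
  have hE' : p + S1 * p = S0 + C c * S1 := by linear_combination hE
  have comp_eq : ∀ m : ℕ,
      homogeneousComponent m p +
        ∑ ij ∈ antidiagonal m, homogeneousComponent ij.1 S1 * homogeneousComponent ij.2 p =
      homogeneousComponent m S0 + C c * homogeneousComponent m S1 := by
    intro m
    have := congrArg (homogeneousComponent m) hE'
    rwa [map_add, map_add, hc_mul, homogeneousComponent_C_mul] at this
  -- components of p below degree d vanish
  have hplow : ∀ m, m ≠ d → homogeneousComponent m p = 0 := fun m hm => by
    rw [homogeneousComponent_of_mem hpmem, if_neg hm]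
  -- key induction: all components of the q's of degree < d/2 vanish
  have key : ∀ i, 2*i < d →
      (∀ j, homogeneousComponent i (q0 j) = 0) ∧
      (∀ j, homogeneousComponent i (q1 j) = 0) := by
    intro i
    induction i using Nat.strong_induction_on with
    | _ i IH =>
      intro hi
      have h0 : ∀ j, ∀ i' < i, homogeneousComponent i' (q0 j) = 0 :=
        fun j i' hi' => (IH i' hi' (by omega)).1 j
      have h1 : ∀ j, ∀ i' < i, homogeneousComponent i' (q1 j) = 0 :=
        fun j i' hi' => (IH i' hi' (by omega)).2 j
      have e := comp_eq (2*i)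
      rw [hc_sum_sq_even i q0 h0, hc_sum_sq_even i q1 h1, hplow (2*i) (by omega)] at e
      have hprod : ∀ ij ∈ antidiagonal (2*i),
          homogeneousComponent ij.1 S1 * homogeneousComponent ij.2 p = 0 := by
        intro ij hij
        have := mem_antidiagonal.mp hij
        rw [hplow ij.2 (by omega), mul_zero]
      rw [Finset.sum_eq_zero hprod, zero_add] at e
      -- e : 0 = ∑ (hc i (q0 j))^2 + C c * ∑ (hc i (q1 j))^2
      have heval : ∀ x : Fin n → ℝ,
          (∑ j, (eval x (homogeneousComponent i (q0 j)))^2) +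
          c * (∑ j, (eval x (homogeneousComponent i (q1 j)))^2) = 0 := by
        intro x
        have h := congrArg (eval x) e
        simpa using h.symm
      have hA : ∀ x : Fin n → ℝ, ∀ j, eval x (homogeneousComponent i (q0 j)) = 0 ∧
          True := fun x j => ⟨by
        have h := heval x
        have t1 : (0:ℝ) ≤ ∑ j, (eval x (homogeneousComponent i (q0 j)))^2 :=
          Finset.sum_nonneg fun j _ => sq_nonneg _
        have t2 : (0:ℝ) ≤ ∑ j, (eval x (homogeneousComponent i (q1 j)))^2 :=
          Finset.sum_nonneg fun j _ => sq_nonneg _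
        have hA' : ∑ j, (eval x (homogeneousComponent i (q0 j)))^2 = 0 := by nlinarith
        have := (Finset.sum_eq_zero_iff_of_nonneg (fun j _ => sq_nonneg _)).mp hA' j
          (mem_univ j)
        exact pow_eq_zero_iff two_ne_zero |>.mp this, trivial⟩
      have hB : ∀ x : Fin n → ℝ, ∀ j, eval x (homogeneousComponent i (q1 j)) = 0 := by
        intro x j
        have h := heval x
        have t1 : (0:ℝ) ≤ ∑ j, (eval x (homogeneousComponent i (q0 j)))^2 :=
          Finset.sum_nonneg fun j _ => sq_nonneg _
        have t2 : (0:ℝ) ≤ ∑ j, (eval x (homogeneousComponent i (q1 j)))^2 :=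
          Finset.sum_nonneg fun j _ => sq_nonneg _
        have hB' : ∑ j, (eval x (homogeneousComponent i (q1 j)))^2 = 0 := by nlinarith
        have := (Finset.sum_eq_zero_iff_of_nonneg (fun j _ => sq_nonneg _)).mp hB' j
          (mem_univ j)
        exact pow_eq_zero_iff two_ne_zero |>.mp this
      exact ⟨fun j => MvPolynomial.funext fun x => by simpa using (hA x j).1,
        fun j => MvPolynomial.funext fun x => by simpa using hB x j⟩
  -- the degree-d component equation exhibits p as SOS
  have e := comp_eq d
  have hpd : homogeneousComponent d p = p := by
    rw [homogeneousComponent_of_mem hpmem, if_pos rfl]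
  have hS1_0 : homogeneousComponent 0 S1 = 0 := by
    have h := hc_sum_sq_even 0 q1 (fun j i hi => absurd hi (Nat.not_lt_zero i))
    rw [show 2*0 = 0 from rfl] at h
    rw [h]
    exact Finset.sum_eq_zero fun j _ => by
      rw [(key 0 (by omega)).2 j, zero_pow two_ne_zero]
  have hprod : ∑ ij ∈ antidiagonal d,
      homogeneousComponent ij.1 S1 * homogeneousComponent ij.2 p = 0 := by
    refine Finset.sum_eq_zero fun ij hij => ?_
    have hm := mem_antidiagonal.mp hij
    rcases eq_or_ne ij.2 d with h2 | h2
    · have h1 : ij.1 = 0 := by omega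
      rw [h1, hS1_0, zero_mul]
    · rw [hplow ij.2 h2, mul_zero]
  rw [hpd, hprod, add_zero] at e
  -- e : p = hc d S0 + C c * hc d S1
  rcases Nat.even_or_odd d with ⟨u, hu⟩ | hodd
  · have hdu : d = 2*u := by omega
    have hq0 : ∀ j, ∀ i < u, homogeneousComponent i (q0 j) = 0 :=
      fun j i hi => (key i (by omega)).1 j
    have hq1 : ∀ j, ∀ i < u, homogeneousComponent i (q1 j) = 0 :=
      fun j i hi => (key i (by omega)).2 j
    rw [hdu, hc_sum_sq_even u q0 hq0, hc_sum_sq_even u q1 hq1] at e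
    refine hnsos ?_
    rw [e]
    exact IsSOS_add ⟨k0, fun j => homogeneousComponent u (q0 j), rfl⟩
      (IsSOS_smul hc.le ⟨k1, fun j => homogeneousComponent u (q1 j), rfl⟩)
  · have hmod : d % 2 = 1 := Nat.odd_iff.mp hodd
    have hq0 : ∀ j, ∀ i, 2*i < d → homogeneousComponent i (q0 j) = 0 :=
      fun j i hi => (key i hi).1 j
    have hq1 : ∀ j, ∀ i, 2*i < d → homogeneousComponent i (q1 j) = 0 :=
      fun j i hi => (key i hi).2 j
    rw [hc_sum_sq_odd hmod q0 hq0, hc_sum_sq_odd hmod q1 hq1, mul_zero, add_zero] at e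
    exact hnsos (e ▸ ⟨0, Fin.elim0, by simp⟩)
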